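/- Let n be a positive integer and let A, B : Matrix (Fin n) (Fin n) ℂ be positive definite Hermitian matrices with A.trace = B.trace. Define log A := hA.cfc Real.log and log B := hB.cfc Real.log via the continuous functional calculus of Hermitian matrices. Then (A * (log A − log B)).trace = 0 if and only if A = B. -/

import Mathlib

open scoped ComplexOrder
open Matrix Finset

private lemma klein_point {x y : ℝ} (hx : 0 < x) (hy : 0 < y) :
    0 ≤ x * Real.log x - x * Real.log y - x + y ∧
      (x * Real.log x - x * Real.log y - x + y = 0 ↔ x = y) := by
  have ht : 0 < y / x := div_pos hy hx
  have h1 : Real.log (y / x) ≤ y / x - 1 := Real.log_le_sub_one_of_pos ht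
  have hlog : Real.log (y / x) = Real.log y - Real.log x := Real.log_div hy.ne' hx.ne'
  have hyx : x * (y / x) = y := by field_simp
  refine ⟨by nlinarith [mul_le_mul_of_nonneg_left h1 hx.le], ?_, by rintro rfl; ring⟩
  intro h
  by_contra hne
  have hne' : y / x ≠ 1 := fun hc => hne (by field_simp at hc; linarith)
  have h2 := Real.log_lt_sub_one_of_pos ht hne'
  nlinarith [mul_lt_mul_of_pos_left h2 hx]

/-- Equality case of Klein's inequality: for positive definite Hermitian matrices `A`, `B` with
equal trace, the quantum relative entropy `Tr A (log A − log B)` vanishes if and only if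
`A = B`, where the matrix logarithm is taken via the continuous functional calculus of
Hermitian matrices. -/
theorem quantum_relative_entropy_eq_zero_iff
    (n : ℕ) (hn : 0 < n) (A B : Matrix (Fin n) (Fin n) ℂ)
    (hA : A.PosDef) (hB : B.PosDef) (htr : A.trace = B.trace) :
    (A * (hA.1.cfc Real.log - hB.1.cfc Real.log)).trace = 0 ↔ A = B := by
  constructor
  · intro h0
    classical
    set a : Fin n → ℝ := hA.1.eigenvalues with ha
    set b : Fin n → ℝ := hB.1.eigenvalues with hb
    set U : Matrix (Fin n) (Fin n) ℂ := (hA.1.eigenvectorUnitary : Matrix (Fin n) (Fin n) ℂ) with hU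
    set V : Matrix (Fin n) (Fin n) ℂ := (hB.1.eigenvectorUnitary : Matrix (Fin n) (Fin n) ℂ) with hV
    set da : Matrix (Fin n) (Fin n) ℂ := Matrix.diagonal (RCLike.ofReal ∘ a) with hda
    set db : Matrix (Fin n) (Fin n) ℂ := Matrix.diagonal (RCLike.ofReal ∘ b) with hdb
    set la : Matrix (Fin n) (Fin n) ℂ := Matrix.diagonal (RCLike.ofReal ∘ Real.log ∘ a) with hla
    set lb : Matrix (Fin n) (Fin n) ℂ := Matrix.diagonal (RCLike.ofReal ∘ Real.log ∘ b) with hlb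
    have hUU : star U * U = 1 := Unitary.star_mul_self_of_mem (SetLike.coe_mem _)
    have hUU' : U * star U = 1 := Unitary.mul_star_self_of_mem (SetLike.coe_mem _)
    have hVV : star V * V = 1 := Unitary.star_mul_self_of_mem (SetLike.coe_mem _)
    have hVV' : V * star V = 1 := Unitary.mul_star_self_of_mem (SetLike.coe_mem _)
    have hAspec : A = U * da * star U := hA.1.spectral_theorem
    have hBspec : B = V * db * star V := hB.1.spectral_theorem
    have hcfcA : hA.1.cfc Real.log = U * la * star U := rfl
    have hcfcB : hB.1.cfc Real.log = V * lb * star V := rfl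
    set W : Matrix (Fin n) (Fin n) ℂ := star U * V with hW
    have hWW : W * star W = 1 := by
      rw [hW, StarMul.star_mul, star_star, mul_assoc, ← mul_assoc V, hVV', one_mul, hUU]
    have hWW' : star W * W = 1 := by
      rw [hW, StarMul.star_mul, star_star, mul_assoc, ← mul_assoc U, hUU', one_mul, hVV]
    set p : Fin n → Fin n → ℝ := fun i j => Complex.normSq (W i j) with hp
    -- row and column sums of p
    have hrow : ∀ i, ∑ j, p i j = 1 := by
      intro i
      have h2 : (W * star W) i i = 1 := by rw [hWW, Matrix.one_apply_eq]
      rw [Matrix.mul_apply] at h2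
      simp only [Matrix.star_apply, Complex.star_def, Complex.mul_conj] at h2
      exact_mod_cast h2
    have hcol : ∀ j, ∑ i, p i j = 1 := by
      intro j
      have h2 : (star W * W) j j = 1 := by rw [hWW', Matrix.one_apply_eq]
      rw [Matrix.mul_apply] at h2
      simp only [Matrix.star_apply, Complex.star_def] at h2
      rw [Finset.sum_congr rfl (fun i _ => by rw [mul_comm, Complex.mul_conj])] at h2
      exact_mod_cast h2
    -- trace computations
    have hsw : star V * U = star W := by rw [hW, StarMul.star_mul, star_star]
    have hT1 : (A * hA.1.cfc Real.log).trace = ↑(∑ i, a i * Real.log (a i)) := by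
      rw [hcfcA, hAspec]
      simp only [mul_assoc]
      rw [← mul_assoc (star U) U (la * star U), hUU, one_mul,
        Matrix.trace_mul_comm U (da * (la * star U))]
      simp only [mul_assoc]
      rw [hUU, mul_one, Matrix.diagonal_mul_diagonal, Matrix.trace_diagonal]
      push_cast
      simp [Function.comp]
    have hT2 : (A * hB.1.cfc Real.log).trace
        = ↑(∑ i, ∑ j, a i * Real.log (b j) * p i j) := by
      rw [hcfcB, hAspec]
      have hre : (U * da * star U) * (V * lb * star V)
          = U * (da * (W * (lb * star W))) * star U := by
        rw [hW, StarMul.star_mul, star_star]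
        simp only [← mul_assoc]
        rw [mul_assoc _ U (star U), hUU', mul_one]
      rw [hre, Matrix.trace_mul_cycle, ← mul_assoc, hUU, one_mul]
      rw [Matrix.trace]
      push_cast
      refine Finset.sum_congr rfl fun i _ => ?_
      rw [Matrix.diag_apply, Matrix.diagonal_mul, Matrix.mul_apply, Finset.mul_sum]
      refine Finset.sum_congr rfl fun j _ => ?_
      rw [Matrix.diagonal_mul, Matrix.star_apply]
      simp only [Function.comp_apply, Complex.star_def, hp,
        show (RCLike.ofReal : ℝ → ℂ) = Complex.ofReal from rfl]
      have hc := Complex.mul_conj (W i j)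
      push_cast
      linear_combination ((a i : ℂ) * (Real.log (b j) : ℂ)) * hc
    have hS : (∑ i, a i * Real.log (a i)) - (∑ i, ∑ j, a i * Real.log (b j) * p i j) = 0 := by
      rw [mul_sub, Matrix.trace_sub, hT1, hT2] at h0
      exact_mod_cast h0
    have htrA : A.trace = ↑(∑ i, a i) := by
      rw [hAspec, Matrix.trace_mul_cycle, hUU, one_mul, Matrix.trace_diagonal]
      push_cast
      simp [Function.comp]
    have htrB : B.trace = ↑(∑ i, b i) := by
      rw [hBspec, Matrix.trace_mul_cycle, hVV, one_mul, Matrix.trace_diagonal]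
      push_cast
      simp [Function.comp]
    have hsum : ∑ i, a i = ∑ j, b j := by
      have h := htr
      rw [htrA, htrB] at h
      exact_mod_cast h
    have hapos : ∀ i, 0 < a i := fun i => hA.eigenvalues_pos i
    have hbpos : ∀ i, 0 < b i := fun i => hB.eigenvalues_pos i
    have e1 : ∑ i, ∑ j, p i j * (a i * Real.log (a i)) = ∑ i, a i * Real.log (a i) := by
      refine Finset.sum_congr rfl fun i _ => ?_
      rw [← Finset.sum_mul, hrow i, one_mul]
    have e2 : ∑ i, ∑ j, p i j * a i = ∑ i, a i := by
      refine Finset.sum_congr rfl fun i _ => ?_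
      rw [← Finset.sum_mul, hrow i, one_mul]
    have e3 : ∑ i, ∑ j, p i j * b j = ∑ j, b j := by
      rw [Finset.sum_comm]
      refine Finset.sum_congr rfl fun j _ => ?_
      rw [← Finset.sum_mul, hcol j, one_mul]
    have key : ∑ i, ∑ j,
        p i j * (a i * Real.log (a i) - a i * Real.log (b j) - a i + b j) = 0 := by
      have expand : ∀ i j : Fin n,
          p i j * (a i * Real.log (a i) - a i * Real.log (b j) - a i + b j)
          = p i j * (a i * Real.log (a i)) - a i * Real.log (b j) * p i j
            - p i j * a i + p i j * b j := fun i j => by ring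
      simp only [expand, Finset.sum_add_distrib, Finset.sum_sub_distrib]
      rw [e1, e2, e3]
      linarith [hS, hsum]
    have hnn : ∀ i j : Fin n,
        0 ≤ p i j * (a i * Real.log (a i) - a i * Real.log (b j) - a i + b j) :=
      fun i j => mul_nonneg (Complex.normSq_nonneg _) (klein_point (hapos i) (hbpos j)).1
    have hz : ∀ i j : Fin n,
        p i j * (a i * Real.log (a i) - a i * Real.log (b j) - a i + b j) = 0 := by
      have h1 := (Finset.sum_eq_zero_iff_of_nonneg
        (fun i _ => Finset.sum_nonneg fun j _ => hnn i j)).mp key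
      intro i j
      exact (Finset.sum_eq_zero_iff_of_nonneg (fun j _ => hnn i j)).mp
        (h1 i (Finset.mem_univ i)) j (Finset.mem_univ j)
    have halt : ∀ i j : Fin n, W i j = 0 ∨ a i = b j := by
      intro i j
      rcases mul_eq_zero.mp (hz i j) with h | h
      · exact Or.inl (by simpa [hp, Complex.normSq_eq_zero] using h)
      · exact Or.inr ((klein_point (hapos i) (hbpos j)).2.mp h)
    have hcomm : da * W = W * db := by
      ext i j
      rw [Matrix.diagonal_mul, Matrix.mul_diagonal]
      rcases halt i j with h | h
      · rw [h, mul_zero, zero_mul]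
      · simp only [Function.comp_apply, h]
        exact mul_comm _ _
    have hda_eq : da = W * db * star W := by
      calc da = da * (W * star W) := by rw [hWW, mul_one]
        _ = da * W * star W := (mul_assoc da W (star W)).symm
        _ = W * db * star W := by rw [hcomm]
    have hUWV : U * W = V := by rw [hW, ← mul_assoc, hUU', one_mul]
    calc A = U * da * star U := hAspec
      _ = U * (W * db * star W) * star U := by rw [← hda_eq]
      _ = (U * W) * db * star (U * W) := by
        rw [show star (U * W) = star W * star U from StarMul.star_mul U W]
        simp only [mul_assoc]
      _ = V * db * star V := by rw [hUWV]
      _ = B := hBspec.symm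
  · rintro rfl
    rw [sub_self, mul_zero, Matrix.trace_zero]
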